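/- Let a, b, c ∈ (0,1] with a² + b² ≤ c² and max(a,b) < c. Define g(α) = a^α + b^α − c^α on [0,∞). Then g(0) = 1 > 0, g(2) ≤ 0, and g has at least one zero in (0,2]; moreover, every zero α₁ of g satisfies α₁ ≥ α₀ where α₀ is the unique solution of a^{α₀} + b^{α₀} = 1 (assuming a² + b² < 1). -/
import Mathlib

theorem stmt_17 (a b c : ℝ) (ha : 0 < a) (ha1 : a ≤ 1) (hb : 0 < b) (hb1 : b ≤ 1)
    (hc : 0 < c) (hc1 : c ≤ 1) (habc : a ^ 2 + b ^ 2 ≤ c ^ 2) (hmax : max a b < c)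
    (hlt : a ^ 2 + b ^ 2 < 1)
    (α₀ : ℝ) (hα₀ : 0 < α₀) (heq : a ^ α₀ + b ^ α₀ = 1) :
    (a ^ (0 : ℝ) + b ^ (0 : ℝ) - c ^ (0 : ℝ) = 1) ∧
    (a ^ (2 : ℝ) + b ^ (2 : ℝ) - c ^ (2 : ℝ) ≤ 0) ∧
    (∃ α₁ : ℝ, 0 < α₁ ∧ α₁ ≤ 2 ∧ a ^ α₁ + b ^ α₁ - c ^ α₁ = 0) ∧
    (∀ α₁ : ℝ, 0 ≤ α₁ → a ^ α₁ + b ^ α₁ - c ^ α₁ = 0 → α₀ ≤ α₁) := by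
  have h2 : ∀ x : ℝ, 0 < x → x ^ (2 : ℝ) = x ^ 2 := by
    intro x hx
    rw [show (2:ℝ) = ((2:ℕ):ℝ) by norm_num, Real.rpow_natCast]
  have ha' : a < 1 := by nlinarith [sq_nonneg b]
  have hb' : b < 1 := by nlinarith [sq_nonneg a]
  refine ⟨by simp [Real.rpow_zero], ?_, ?_, ?_⟩
  · rw [h2 a ha, h2 b hb, h2 c hc]; linarith
  · have hcont : Continuous (fun α : ℝ => a ^ α + b ^ α - c ^ α) := by
      exact ((continuous_const.rpow continuous_id fun _ => Or.inl ha.ne').add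
        (continuous_const.rpow continuous_id fun _ => Or.inl hb.ne')).sub
        (continuous_const.rpow continuous_id fun _ => Or.inl hc.ne')
    have h02 : (0:ℝ) ≤ 2 := by norm_num
    have hg0 : (fun α : ℝ => a ^ α + b ^ α - c ^ α) 0 = 1 := by simp [Real.rpow_zero]
    have hg2 : (fun α : ℝ => a ^ α + b ^ α - c ^ α) 2 ≤ 0 := by
      simp only; rw [h2 a ha, h2 b hb, h2 c hc]; linarith
    have := intermediate_value_Icc' h02 (hcont.continuousOn (s := Set.Icc 0 2))
    have hmem : (0:ℝ) ∈ Set.Icc ((fun α : ℝ => a ^ α + b ^ α - c ^ α) 2)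
        ((fun α : ℝ => a ^ α + b ^ α - c ^ α) 0) := by
      constructor <;> simp_all
    obtain ⟨x, hx, hxe⟩ := this hmem
    refine ⟨x, ?_, hx.2, hxe⟩
    rcases hx.1.lt_or_eq with h | h
    · exact h
    · exfalso; rw [← h] at hxe; rw [hg0] at hxe; norm_num at hxe
  · intro α₁ hα₁ hzero
    by_contra hcon
    push_neg at hcon
    have h1 : a ^ α₀ < a ^ α₁ := Real.rpow_lt_rpow_of_exponent_gt ha ha' hcon
    have h2' : b ^ α₀ < b ^ α₁ := Real.rpow_lt_rpow_of_exponent_gt hb hb' hcon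
    have h3 : c ^ α₁ ≤ 1 := Real.rpow_le_one hc.le hc1 hα₁
    linarith
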